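/- Let r ≥ 1 and set ω_{hk} = e^{2πih/k}. Suppose (c_{hkℓ}(r)), indexed by pairs of integers 0 ≤ h < k ≤ r with gcd(h, k) = 1 and integers 1 ≤ ℓ ≤ ⌊r/k⌋, are complex numbers such that 1/((1−z)(1−z^2)⋯(1−z^r)) = Σ_{0≤h<k≤r, gcd(h,k)=1} Σ_{ℓ=1}^{⌊r/k⌋} c_{hkℓ}(r)/(z − ω_{hk})^ℓ for every complex z with |z| < 1. Then for every 1 ≤ m ≤ r, c_{01m}(r) = ((−1)^r (m−1)!/r!) · Σ_{ℓ=m}^{r} (S(ℓ, m)/(ℓ−1)!) · Σ_{i_1+⋯+i_r=r−ℓ} (B_{i_1}⋯B_{i_r}/(i_1!⋯i_r!)) · 1^{i_1} 2^{i_2} ⋯ r^{i_r}, where the inner sum is over tuples (i_1,…,i_r) of nonnegative integers with i_1+⋯+i_r = r−ℓ. -/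

import Mathlib

/-- Stirling numbers of the second kind: the number of partitions of an
`n`-element set into `k` nonempty blocks. -/
def stirling2 : ℕ → ℕ → ℕ
  | 0, 0 => 1
  | 0, _ + 1 => 0
  | _ + 1, 0 => 0
  | n + 1, k + 1 => (k + 1) * stirling2 n (k + 1) + stirling2 n k

open PowerSeries
noncomputable section OSullivanAux

def Us : ℂ⟦X⟧ := PowerSeries.mk fun n => (((n+1).factorial : ℂ))⁻¹

lemma X_mul_Us : (X : ℂ⟦X⟧) * Us = exp ℂ - 1 := by
  ext n
  cases n with
  | zero => simp [Us, constantCoeff_exp]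
  | succ n =>
      rw [coeff_succ_X_mul]
      simp [Us, coeff_exp, map_sub, PowerSeries.coeff_one, Nat.succ_ne_zero]

lemma constantCoeff_Us : constantCoeff Us = 1 := by
  simp [Us, ← coeff_zero_eq_constantCoeff_apply]

lemma Us_ne : constantCoeff Us ≠ 0 := by rw [constantCoeff_Us]; exact one_ne_zero

def Js : ℂ⟦X⟧ := Us⁻¹

lemma Us_mul_Js : Us * Js = 1 := PowerSeries.mul_inv_cancel _ Us_ne

lemma constantCoeff_Js : constantCoeff Js = 1 := by
  have := congrArg (constantCoeff) Us_mul_Js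
  rw [map_mul, map_one, constantCoeff_Us, one_mul] at this
  exact this

lemma derivative_exp' : d⁄dX ℂ (exp ℂ) = exp ℂ := by
  ext n
  rw [PowerSeries.coeff_derivative]
  simp [coeff_exp]
  rw [Nat.factorial_succ]
  have h1 : ((n.factorial : ℂ)) ≠ 0 := by exact_mod_cast Nat.factorial_ne_zero n
  have h2 : ((n : ℂ) + 1) ≠ 0 := Nat.cast_add_one_ne_zero n
  push_cast
  field_simp

lemma exp_eq_Us_add : exp ℂ = Us + X * d⁄dX ℂ Us := by
  have h := congrArg (d⁄dX ℂ) X_mul_Us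
  rw [Derivation.leibniz, map_sub, derivative_exp', Derivation.map_one_eq_zero] at h
  simp only [smul_eq_mul, derivative_X, mul_one, sub_zero] at h
  linear_combination -h

end OSullivanAux

section Resid
open PowerSeries

lemma X_mul_dUs : (X:ℂ⟦X⟧) * d⁄dX ℂ Us = exp ℂ - Us := by
  linear_combination - exp_eq_Us_add

lemma X_mul_dJs : (X:ℂ⟦X⟧) * d⁄dX ℂ Js = -(exp ℂ - Us) * Js^2 := by
  have hdUJ : Us * d⁄dX ℂ Js + Js * d⁄dX ℂ Us = 0 := by
    have h := congrArg (d⁄dX ℂ) Us_mul_Js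
    rw [Derivation.leibniz, Derivation.map_one_eq_zero] at h
    simpa [smul_eq_mul] using h
  linear_combination (X * Js) * hdUJ - (X * d⁄dX ℂ Js) * Us_mul_Js - Js^2 * X_mul_dUs

lemma key_resid (k : ℕ) : coeff (k+1) (exp ℂ * Js^(k+2)) = 0 := by
  have hid : X * d⁄dX ℂ (Js^(k+1)) =
      C ((k:ℂ)+1) * Js^(k+1) - C ((k:ℂ)+1) * (exp ℂ * Js^(k+2)) := by
    rw [Derivation.leibniz_pow]
    simp only [Nat.add_sub_cancel, nsmul_eq_mul, smul_eq_mul]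
    have hcast : ((k+1 : ℕ) : ℂ⟦X⟧) = C ((k:ℂ)+1) := by
      simp [map_add, map_one, map_natCast]
    rw [hcast]
    linear_combination C ((k:ℂ)+1) * Js^k * X_mul_dJs + C ((k:ℂ)+1) * Js^(k+1) * Us_mul_Js
  have h := congrArg (coeff (k+1)) hid
  rw [coeff_succ_X_mul, PowerSeries.coeff_derivative, map_sub, PowerSeries.coeff_C_mul,
    PowerSeries.coeff_C_mul] at h
  have hk : ((k:ℂ)+1) ≠ 0 := Nat.cast_add_one_ne_zero k
  have : ((k:ℂ)+1) * coeff (k+1) (exp ℂ * Js^(k+2)) = 0 := by push_cast at h ⊢; linear_combination h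
  exact (mul_eq_zero.mp this).resolve_left hk

end Resid



lemma stirling2_of_lt : ∀ {l m : ℕ}, l < m → stirling2 l m = 0 := by
  intro l
  induction l with
  | zero => intro m hm; cases m with
      | zero => omega
      | succ m => rfl
  | succ l ih =>
      intro m hm
      cases m with
      | zero => omega
      | succ m =>
          show (m + 1) * stirling2 l (m + 1) + stirling2 l m = 0
          rw [ih (by omega), ih (by omega)]
          ring

lemma coeff_exp_sub_one_pow (m l : ℕ) :
    (l.factorial : ℂ) * coeff l ((exp ℂ - 1)^m) = (m.factorial : ℂ) * (stirling2 l m : ℂ) := by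
  induction m generalizing l with
  | zero =>
      cases l with
      | zero => simp [stirling2]
      | succ l => simp [stirling2, PowerSeries.coeff_one, Nat.succ_ne_zero]
  | succ m ih =>
      -- derivative recursion
      have hd : d⁄dX ℂ ((exp ℂ - 1)^(m+1)) =
          ((m+1 : ℕ) : ℂ⟦X⟧) * ((exp ℂ - 1)^(m+1) + (exp ℂ - 1)^m) := by
        rw [Derivation.leibniz_pow]
        simp only [Nat.add_sub_cancel, nsmul_eq_mul, smul_eq_mul, map_sub,
          derivative_exp', Derivation.map_one_eq_zero, sub_zero]
        ring
      induction l with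
      | zero =>
          have h0 : constantCoeff ((exp ℂ - 1)^(m+1)) = 0 := by
            rw [map_pow, map_sub, constantCoeff_exp, map_one, sub_self, zero_pow (by omega)]
          rw [← coeff_zero_eq_constantCoeff_apply] at h0
          rw [h0, stirling2_of_lt (by omega)]
          simp
      | succ l ihl =>
          have h := congrArg (coeff l) hd
          rw [PowerSeries.coeff_derivative] at h
          have hcast : ((m+1 : ℕ) : ℂ⟦X⟧) = C ((m:ℂ)+1) := by simp
          rw [hcast, PowerSeries.coeff_C_mul, map_add] at h
          -- h : coeff (l+1) (E^(m+1)) * (l+1) = (m+1) * (coeff l E^(m+1) + coeff l E^m)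
          show ((l+1).factorial : ℂ) * coeff (l+1) ((exp ℂ - 1)^(m+1)) = _
          have hfac : ((l+1).factorial : ℂ) = (l.factorial : ℂ) * ((l:ℂ)+1) := by
            rw [Nat.factorial_succ]; push_cast; ring
          have hS : (stirling2 (l+1) (m+1) : ℂ)
              = ((m:ℂ)+1) * (stirling2 l (m+1) : ℂ) + (stirling2 l m : ℂ) := by
            show ((((m + 1) * stirling2 l (m + 1) + stirling2 l m : ℕ)) : ℂ) = _
            push_cast; ring
          have hfs : ((m+1).factorial : ℂ) = ((m:ℂ)+1) * (m.factorial : ℂ) := by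
            rw [Nat.factorial_succ]; push_cast; ring
          rw [hfac, hS, hfs]
          -- use ihl : statement for l with (m+1), and ih l, ih? careful: ihl is induction hyp for l at m+1
          push_cast at h
          calc (l.factorial : ℂ) * ((l:ℂ)+1) * coeff (l+1) ((exp ℂ - 1)^(m+1))
              = (l.factorial : ℂ) * (coeff (l+1) ((exp ℂ - 1)^(m+1)) * ((l:ℂ)+1)) := by ring
            _ = (l.factorial : ℂ) * (((m:ℂ)+1) * (coeff l ((exp ℂ - 1)^(m+1)) + coeff l ((exp ℂ - 1)^m))) := by rw [h]
            _ = ((m:ℂ)+1) * ((l.factorial : ℂ) * coeff l ((exp ℂ - 1)^(m+1)))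
                + ((m:ℂ)+1) * ((l.factorial : ℂ) * coeff l ((exp ℂ - 1)^m)) := by ring
            _ = ((m:ℂ)+1) * (((m+1).factorial : ℂ) * (stirling2 l (m+1) : ℂ))
                + ((m:ℂ)+1) * ((m.factorial : ℂ) * (stirling2 l m : ℂ)) := by rw [ihl, ih]
            _ = ((m:ℂ)+1) * (m.factorial : ℂ) * (((m:ℂ)+1) * (stirling2 l (m+1):ℂ) + (stirling2 l m : ℂ)) := by
                rw [hfs]; ring

section Bern
open PowerSeries

lemma rescale_X' (c : ℂ) : rescale c (X : ℂ⟦X⟧) = C c * X := by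
  ext n
  rw [coeff_rescale, PowerSeries.coeff_C_mul]
  rcases eq_or_ne n 1 with h | h <;> simp [PowerSeries.coeff_X, h]

lemma constantCoeff_rescale (c : ℂ) (f : ℂ⟦X⟧) :
    constantCoeff (rescale c f) = constantCoeff f := by
  rw [← coeff_zero_eq_constantCoeff_apply, coeff_rescale, pow_zero, one_mul,
    coeff_zero_eq_constantCoeff_apply]

lemma one_sub_exp_pow (k : ℕ) :
    (1 : ℂ⟦X⟧) - exp ℂ ^ k = -(C ((k : ℕ) : ℂ) * X * rescale ((k : ℕ) : ℂ) Us) := by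
  rw [exp_pow_eq_rescale_exp]
  have h : rescale ((k : ℕ) : ℂ) (exp ℂ - 1) = rescale ((k:ℕ):ℂ) (exp ℂ) - 1 := by
    rw [map_sub, map_one]
  rw [← X_mul_Us, map_mul, rescale_X'] at h
  linear_combination h

/-- Bernoulli power series over ℂ. -/
noncomputable def Bb : ℂ⟦X⟧ := bernoulliPowerSeries ℂ

lemma coeff_Bb (n : ℕ) : coeff n Bb = ((bernoulli n : ℚ) : ℂ) / (n.factorial : ℂ) := by
  rw [Bb, bernoulliPowerSeries, coeff_mk, eq_ratCast (algebraMap ℚ ℂ)]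
  push_cast
  ring

lemma Bb_mul_Us : Bb * Us = 1 := by
  have h : (X : ℂ⟦X⟧) * (Bb * Us) = X * 1 := by
    rw [mul_one]
    calc (X : ℂ⟦X⟧) * (Bb * Us) = Bb * (X * Us) := by ring
      _ = Bb * (exp ℂ - 1) := by rw [X_mul_Us]
      _ = X := bernoulliPowerSeries_mul_exp_sub_one ℂ
  exact mul_left_cancel₀ PowerSeries.X_ne_zero h

lemma rescale_Bb_mul (k : ℕ) :
    rescale ((k:ℕ):ℂ) Bb * rescale ((k:ℕ):ℂ) Us = 1 := by
  rw [← map_mul, Bb_mul_Us, map_one]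

end Bern
section Aux2
open PowerSeries Finset

lemma coeff_exp_mul_exp_sub_one_pow (m a : ℕ) (hm : 1 ≤ m) :
    coeff a (exp ℂ * (exp ℂ - 1)^(m-1)) =
      ((m-1).factorial : ℂ) * (stirling2 (a+1) m : ℂ) / (a.factorial : ℂ) := by
  obtain ⟨m', rfl⟩ : ∃ m', m = m' + 1 := ⟨m - 1, by omega⟩
  simp only [Nat.add_sub_cancel]
  have hd : d⁄dX ℂ ((exp ℂ - 1)^(m'+1)) =
      C ((m':ℂ)+1) * ((exp ℂ - 1)^m' * exp ℂ) := by
    rw [Derivation.leibniz_pow]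
    simp only [Nat.add_sub_cancel, nsmul_eq_mul, smul_eq_mul, map_sub,
      derivative_exp', Derivation.map_one_eq_zero, sub_zero]
    have hcast : ((m'+1 : ℕ) : ℂ⟦X⟧) = C ((m':ℂ)+1) := by simp
    rw [hcast]
  have h := congrArg (coeff a) hd
  rw [PowerSeries.coeff_derivative, PowerSeries.coeff_C_mul] at h
  have h2 := coeff_exp_sub_one_pow (m'+1) (a+1)
  have hfa' : ((a.factorial : ℕ) : ℂ) ≠ 0 := Nat.cast_ne_zero.mpr (Nat.factorial_ne_zero a)
  have hm1 : ((m':ℂ)+1) ≠ 0 := Nat.cast_add_one_ne_zero m'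
  have hfac : (((a+1).factorial : ℕ) : ℂ) = ((a.factorial : ℕ):ℂ) * ((a:ℂ)+1) := by
    rw [Nat.factorial_succ]; push_cast; ring
  have hfs : (((m'+1).factorial : ℕ) : ℂ) = ((m':ℂ)+1) * ((m'.factorial : ℕ):ℂ) := by
    rw [Nat.factorial_succ]; push_cast; ring
  have hgoal : ((m':ℂ)+1) * (coeff a ((exp ℂ - 1)^m' * exp ℂ) * (a.factorial : ℂ)) =
      ((m':ℂ)+1) * ((m'.factorial : ℂ) * (stirling2 (a+1) (m'+1) : ℂ)) := by
    linear_combination (-(a.factorial:ℂ)) * h + h2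
      - (coeff (a+1) ((exp ℂ - 1)^(m'+1))) * hfac + ((stirling2 (a+1) (m'+1) : ℂ)) * hfs
  have hcc := mul_left_cancel₀ hm1 hgoal
  rw [mul_comm (exp ℂ)]
  rw [eq_div_iff hfa']
  linear_combination hcc

end Aux2
section Aux3
open PowerSeries Finset

lemma coeff_Bp (r b : ℕ) :
    coeff b (∏ i ∈ Finset.range r, rescale ((i+1 : ℕ) : ℂ) Bb) =
      ∑ i ∈ Finset.Nat.antidiagonalTuple r b, ∏ k : Fin r,
        (((bernoulli (i k) : ℚ) : ℂ) / ((i k).factorial : ℂ) * (((k : ℕ) + 1 : ℕ) : ℂ) ^ (i k)) := by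
  rw [← Fin.prod_univ_eq_prod_range (fun i => rescale ((i+1 : ℕ) : ℂ) Bb) r]
  rw [PowerSeries.coeff_prod]
  apply Finset.sum_nbij' (i := fun l => (fun k => l k : Fin r → ℕ))
    (j := fun x => Finsupp.equivFunOnFinite.symm x)
  · intro l hl
    rw [Finset.mem_finsuppAntidiag] at hl
    rw [Finset.Nat.mem_antidiagonalTuple]
    exact hl.1
  · intro x hx
    rw [Finset.Nat.mem_antidiagonalTuple] at hx
    rw [Finset.mem_finsuppAntidiag]
    constructor
    · simpa using hx
    · exact Finset.subset_univ _
  · intro l _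
    exact Finsupp.equivFunOnFinite.symm_apply_apply l
  · intro x _
    simp
  · intro l hl
    apply Finset.prod_congr rfl
    intro k _
    rw [coeff_rescale, coeff_Bb]
    ring

end Aux3


set_option maxHeartbeats 1000000 in
/-- O'Sullivan's formula for Rademacher's coefficients `c_{01m}(r)` in the partial
fraction decomposition of `1/((1-z)(1-z²)⋯(1-z^r))`, where `ω_{hk} = e^{2πih/k}`. -/
theorem stmt15 (r : ℕ) (hr : 1 ≤ r)
    (c : ℕ → ℕ → ℕ → ℂ)
    (hc : ∀ z : ℂ, ‖z‖ < 1 →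
      (∏ i ∈ Finset.range r, (1 - z ^ (i + 1)))⁻¹ =
        ∑ q ∈ (Finset.range (r + 1) ×ˢ Finset.range (r + 1)).filter
            (fun q => q.1 < q.2 ∧ Nat.gcd q.1 q.2 = 1),
          ∑ ℓ ∈ Finset.Icc 1 (r / q.2),
            c q.1 q.2 ℓ /
              (z - Complex.exp (2 * Real.pi * Complex.I * (q.1 : ℂ) / (q.2 : ℂ))) ^ ℓ) :
    ∀ m ∈ Finset.Icc 1 r,
      c 0 1 m = ((-1 : ℂ) ^ r * ((m - 1).factorial : ℂ) / (r.factorial : ℂ)) *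
        ∑ ℓ ∈ Finset.Icc m r,
          ((stirling2 ℓ m : ℂ) / ((ℓ - 1).factorial : ℂ)) *
            ∑ i ∈ Finset.Nat.antidiagonalTuple r (r - ℓ),
              ∏ k : Fin r,
                (((bernoulli (i k) : ℚ) : ℂ) / ((i k).factorial : ℂ) *
                  (((k : ℕ) + 1 : ℕ) : ℂ) ^ (i k)) := by

  classical
  intro m hm
  obtain ⟨hm1, hmr⟩ := Finset.mem_Icc.mp hm
  set S : Finset (ℕ × ℕ) := (Finset.range (r + 1) ×ˢ Finset.range (r + 1)).filter
      (fun q => q.1 < q.2 ∧ Nat.gcd q.1 q.2 = 1) with hSdef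
  set ω : ℕ × ℕ → ℂ := fun q => Complex.exp (2 * Real.pi * Complex.I * (q.1 : ℂ) / (q.2 : ℂ))
    with hωdef
  have hq0S : ((0,1) : ℕ × ℕ) ∈ S := by
    have : (0:ℕ) < r + 1 ∧ 1 < r + 1 := by omega
    simp [hSdef, Finset.mem_filter, Finset.mem_product, Finset.mem_range, this]
  have hω01 : ω (0,1) = 1 := by
    simp [hωdef]
  have hmemS : ∀ q ∈ S, q.1 < q.2 ∧ q.2 ≤ r ∧ Nat.gcd q.1 q.2 = 1 := by
    intro q hq
    simp only [hSdef, Finset.mem_filter, Finset.mem_product, Finset.mem_range] at hq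
    omega
  have hωnorm : ∀ q ∈ S, ‖ω q‖ = 1 := by
    intro q hq
    have h2 : (2 * Real.pi * Complex.I * (q.1 : ℂ) / (q.2 : ℂ))
        = ((2 * Real.pi * q.1 / q.2 : ℝ) : ℂ) * Complex.I := by
      push_cast
      ring
    rw [hωdef]; simp only []
    rw [h2, Complex.norm_exp_ofReal_mul_I]
  have hωne1 : ∀ q ∈ S, q ≠ (0,1) → ω q ≠ 1 := by
    intro q hq hne
    obtain ⟨h12, h2r, hgcd⟩ := hmemS q hq
    have hq1 : 1 ≤ q.1 := by
      rcases Nat.eq_zero_or_pos q.1 with h0 | h1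
      · exfalso
        rw [h0] at hgcd
        simp [Nat.gcd] at hgcd
        apply hne
        rw [Prod.ext_iff]
        constructor
        · exact h0
        · simp [hgcd]
      · exact h1
    intro habs
    rw [hωdef] at habs
    rw [Complex.exp_eq_one_iff] at habs
    obtain ⟨n, hn⟩ := habs
    have hk0 : ((q.2 : ℂ)) ≠ 0 := Nat.cast_ne_zero.mpr (by omega)
    have h2pi : (2 * (Real.pi : ℂ) * Complex.I) ≠ 0 := by
      simp [Real.pi_ne_zero, Complex.I_ne_zero, Complex.ofReal_ne_zero]
    have hqn : (q.1 : ℂ) = n * q.2 := by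
      field_simp at hn
      have := hn
      -- hn : 2 * π * I * q.1 = n * (2 * π * I) * q.2  (roughly)
      apply mul_left_cancel₀ h2pi
      linear_combination (2 * (Real.pi : ℂ) * Complex.I) * this
    have hqz : (q.1 : ℤ) = n * (q.2 : ℤ) := by exact_mod_cast hqn
    have h1 : (1 : ℤ) ≤ q.1 := by exact_mod_cast hq1
    have h2 : (q.1 : ℤ) < q.2 := by exact_mod_cast h12
    have h3 : (0 : ℤ) < q.2 := by exact_mod_cast (show 0 < q.2 by omega)
    rcases le_or_gt n 0 with hn0 | hn0
    · nlinarith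
    · nlinarith
  -- nonvanishing facts in the disc
  have hzω : ∀ z : ℂ, ‖z‖ < 1 → ∀ q ∈ S, z - ω q ≠ 0 := by
    intro z hz q hq
    rw [sub_ne_zero]
    intro habs
    have hthis := hωnorm q hq
    rw [← habs] at hthis
    linarith
  have hDz : ∀ z : ℂ, ‖z‖ < 1 → (∏ i ∈ Finset.range r, (1 - z ^ (i + 1))) ≠ 0 := by
    intro z hz
    apply Finset.prod_ne_zero_iff.mpr
    intro i _
    rw [sub_ne_zero]
    intro habs
    have h1 : ‖z ^ (i+1)‖ < 1 := by
      rw [norm_pow]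
      exact pow_lt_one₀ (norm_nonneg z) hz (Nat.succ_ne_zero i)
    rw [← habs] at h1
    simp at h1
  -- the polynomial identity
  have claim1 : (∏ q ∈ S, (Polynomial.X - Polynomial.C (ω q)) ^ r) =
      (∏ i ∈ Finset.range r, (1 - Polynomial.X ^ (i+1))) *
        ∑ q ∈ S, ∑ ℓ ∈ Finset.Icc 1 (r / q.2),
          Polynomial.C (c q.1 q.2 ℓ) *
            ((Polynomial.X - Polynomial.C (ω q)) ^ (r - ℓ) *
              ∏ q' ∈ S.erase q, (Polynomial.X - Polynomial.C (ω q')) ^ r) := by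
    apply Polynomial.eq_of_infinite_eval_eq
    have himg : ((fun t : ℝ => (t : ℂ)) '' (Set.Ioo 0 1)).Infinite :=
      (Set.Ioo_infinite (by norm_num)).image
        (fun a _ b _ h => Complex.ofReal_injective h)
    apply Set.Infinite.mono _ himg
    rintro _ ⟨t, ht, rfl⟩
    have hz : ‖(t : ℂ)‖ < 1 := by
      rw [Complex.norm_real]
      rw [Real.norm_eq_abs, abs_of_pos ht.1]
      exact ht.2
    set z := (t : ℂ)
    show _ = _
    -- evaluate
    simp only [Polynomial.eval_prod, Polynomial.eval_mul, Polynomial.eval_pow,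
      Polynomial.eval_sub, Polynomial.eval_X, Polynomial.eval_C, Polynomial.eval_finset_sum,
      Polynomial.eval_one]
    have hterm : ∀ q ∈ S, ∀ ℓ ∈ Finset.Icc 1 (r / q.2),
        c q.1 q.2 ℓ * ((z - ω q) ^ (r - ℓ) * ∏ q' ∈ S.erase q, (z - ω q') ^ r) =
          (c q.1 q.2 ℓ / (z - ω q) ^ ℓ) * ∏ q' ∈ S, (z - ω q') ^ r := by
      intro q hq ℓ hℓ
      rw [← Finset.mul_prod_erase S (fun q' => (z - ω q') ^ r) hq]
      have hℓr : ℓ ≤ r := le_trans (Finset.mem_Icc.mp hℓ).2 (Nat.div_le_self r q.2)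
      rw [pow_sub₀ _ (hzω z hz q hq) hℓr]
      field_simp
    calc ∏ q ∈ S, (z - ω q) ^ r
        = (∏ i ∈ Finset.range r, (1 - z ^ (i+1))) *
            ((∏ i ∈ Finset.range r, (1 - z ^ (i+1)))⁻¹ * ∏ q ∈ S, (z - ω q) ^ r) := by
          rw [← mul_assoc, mul_inv_cancel₀ (hDz z hz), one_mul]
      _ = (∏ i ∈ Finset.range r, (1 - z ^ (i+1))) *
            ∑ q ∈ S, ∑ ℓ ∈ Finset.Icc 1 (r / q.2),
              c q.1 q.2 ℓ * ((z - ω q) ^ (r - ℓ) * ∏ q' ∈ S.erase q, (z - ω q') ^ r) := by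
          congr 1
          rw [hc z hz, Finset.sum_mul]
          apply Finset.sum_congr rfl
          intro q hq
          rw [Finset.sum_mul]
          apply Finset.sum_congr rfl
          intro ℓ hℓ
          rw [hterm q hq ℓ hℓ]
  -- Step 2: move to power series via evaluation at exp
  have hEqA := congrArg (Polynomial.aeval (exp ℂ)) claim1
  simp only [map_prod, map_sum, map_mul, map_pow, map_sub, map_one, Polynomial.aeval_X,
    Polynomial.aeval_C, PowerSeries.algebraMap_apply, Algebra.algebraMap_self,
    RingHom.id_apply] at hEqA
  have hf0 : exp ℂ - PowerSeries.C (ω (0,1)) = X * Us := by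
    rw [hω01, map_one, X_mul_Us]
  set V : ℂ⟦X⟧ := ∏ q ∈ S.erase (0,1), (exp ℂ - PowerSeries.C (ω q)) ^ r with hVdef
  set Vr : ℂ⟦X⟧ := ∏ i ∈ Finset.range r, rescale ((i+1 : ℕ) : ℂ) Us with hVrdef
  set Bp : ℂ⟦X⟧ := ∏ i ∈ Finset.range r, rescale ((i+1 : ℕ) : ℂ) Bb with hBpdef
  have hBpVr : Bp * Vr = 1 := by
    rw [hBpdef, hVrdef, ← Finset.prod_mul_distrib]
    apply Finset.prod_eq_one
    intro i _
    exact rescale_Bb_mul (i+1)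
  have hDe : (∏ i ∈ Finset.range r, ((1:ℂ⟦X⟧) - exp ℂ ^ (i+1))) =
      PowerSeries.C ((-1:ℂ)^r * (r.factorial : ℂ)) * X ^ r * Vr := by
    calc (∏ i ∈ Finset.range r, ((1:ℂ⟦X⟧) - exp ℂ ^ (i+1)))
        = ∏ i ∈ Finset.range r,
            ((-1 : ℂ⟦X⟧) * (PowerSeries.C ((i+1:ℕ):ℂ) * X * rescale ((i+1:ℕ):ℂ) Us)) := by
          apply Finset.prod_congr rfl
          intro i _
          rw [one_sub_exp_pow (i+1)]
          ring
      _ = PowerSeries.C ((-1:ℂ)^r * (r.factorial : ℂ)) * X ^ r * Vr := by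
          rw [Finset.prod_mul_distrib, Finset.prod_mul_distrib, Finset.prod_mul_distrib,
            Finset.prod_const, Finset.prod_const, Finset.card_range, ← map_prod]
          have hfact : (∏ i ∈ Finset.range r, ((i+1:ℕ):ℂ)) = (r.factorial : ℂ) := by
            rw [← Nat.cast_prod]
            norm_cast
            exact Finset.prod_range_add_one_eq_factorial r
          rw [hfact, ← hVrdef]
          have hneg : ((-1 : ℂ⟦X⟧)) ^ r = PowerSeries.C ((-1:ℂ)^r) := by
            rw [map_pow, map_neg, map_one]
          rw [hneg, map_mul]
          ring
  -- LHS decomposition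
  have hLHS : (∏ q ∈ S, (exp ℂ - PowerSeries.C (ω q)) ^ r) = (X*Us)^r * V := by
    rw [← Finset.mul_prod_erase S _ hq0S, hf0, hVdef]
  -- other-terms decomposition
  set G : ℂ⟦X⟧ := ∑ q ∈ S.erase (0,1), ∑ ℓ ∈ Finset.Icc 1 (r / q.2),
      PowerSeries.C (c q.1 q.2 ℓ) * ((exp ℂ - PowerSeries.C (ω q)) ^ (r - ℓ) *
        ∏ q' ∈ (S.erase q).erase (0,1), (exp ℂ - PowerSeries.C (ω q')) ^ r) with hGdef
  have hother : ∀ q ∈ S.erase (0,1),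
      (∑ ℓ ∈ Finset.Icc 1 (r / q.2), PowerSeries.C (c q.1 q.2 ℓ) *
        ((exp ℂ - PowerSeries.C (ω q)) ^ (r - ℓ) *
          ∏ q' ∈ S.erase q, (exp ℂ - PowerSeries.C (ω q')) ^ r)) =
      X^r * Us^r * (∑ ℓ ∈ Finset.Icc 1 (r / q.2), PowerSeries.C (c q.1 q.2 ℓ) *
        ((exp ℂ - PowerSeries.C (ω q)) ^ (r - ℓ) *
          ∏ q' ∈ (S.erase q).erase (0,1), (exp ℂ - PowerSeries.C (ω q')) ^ r)) := by
    intro q hq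
    have hne : (0,1) ≠ q := fun h => (Finset.mem_erase.mp hq).1 h.symm
    have hq01mem : ((0,1) : ℕ × ℕ) ∈ S.erase q := Finset.mem_erase.mpr ⟨hne, hq0S⟩
    rw [← Finset.mul_prod_erase (S.erase q) _ hq01mem, hf0, Finset.mul_sum]
    apply Finset.sum_congr rfl
    intro ℓ _
    rw [mul_pow]
    ring
  -- q0 sum normalization
  have hq0div : r / ((0,1) : ℕ × ℕ).2 = r := Nat.div_one r
  -- the sum over S split
  set Sum1 : ℂ⟦X⟧ := ∑ ℓ ∈ Finset.Icc 1 r,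
      PowerSeries.C (c 0 1 ℓ) * ((X*Us) ^ (r - ℓ) * V) with hSum1def
  have hEqA2 : (X*Us)^r * V =
      (PowerSeries.C ((-1:ℂ)^r * (r.factorial:ℂ)) * X^r * Vr) * (Sum1 + X^r * Us^r * G) := by
    rw [← hLHS, hEqA, hDe]
    congr 1
    rw [← Finset.add_sum_erase _ _ hq0S]
    congr 1
    · rw [hq0div, hSum1def]
      apply Finset.sum_congr rfl
      intro ℓ _
      rw [hf0, hVdef]
    · rw [hGdef, Finset.mul_sum]
      exact Finset.sum_congr rfl hother
  have hXr : (X : ℂ⟦X⟧)^r ≠ 0 := pow_ne_zero _ PowerSeries.X_ne_zero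
  have hEqB : Us^r * V =
      (PowerSeries.C ((-1:ℂ)^r * (r.factorial:ℂ)) * Vr) * (Sum1 + X^r * Us^r * G) := by
    apply mul_left_cancel₀ hXr
    calc X^r * (Us^r * V) = (X*Us)^r * V := by ring
      _ = (PowerSeries.C ((-1:ℂ)^r * (r.factorial:ℂ)) * X^r * Vr) * (Sum1 + X^r*Us^r*G) :=
          hEqA2
      _ = X^r * ((PowerSeries.C ((-1:ℂ)^r * (r.factorial:ℂ)) * Vr) * (Sum1 + X^r*Us^r*G)) := by
          ring
  -- V is a unit
  have hV0 : constantCoeff V ≠ 0 := by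
    rw [hVdef, map_prod]
    apply Finset.prod_ne_zero_iff.mpr
    intro q hq
    rw [map_pow, map_sub, constantCoeff_exp, PowerSeries.constantCoeff_C]
    apply pow_ne_zero
    rw [sub_ne_zero]
    exact fun h => (hωne1 q (Finset.mem_erase.mp hq).2 (Finset.mem_erase.mp hq).1) h.symm
  set Vi : ℂ⟦X⟧ := V⁻¹ with hVidef
  have hVVi : V * Vi = 1 := PowerSeries.mul_inv_cancel _ hV0
  -- the residue extraction
  set N : ℕ := r + 1 - m with hNdef
  have hJU : (Js : ℂ⟦X⟧)^N * Us^N = 1 := by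
    rw [← mul_pow, mul_comm Js Us, Us_mul_Js, one_pow]
  set Sum2 : ℂ⟦X⟧ := ∑ ℓ ∈ Finset.Icc 1 r,
      PowerSeries.C (c 0 1 ℓ) * (exp ℂ * Js^N * X^(r-ℓ) * Us^(r-ℓ)) with hSum2def
  have hSumlemma : exp ℂ * Js^N * Vi * Sum1 = Sum2 := by
    rw [hSum1def, hSum2def, Finset.mul_sum]
    apply Finset.sum_congr rfl
    intro ℓ _
    calc exp ℂ * Js^N * Vi * (PowerSeries.C (c 0 1 ℓ) * ((X*Us) ^ (r - ℓ) * V))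
        = PowerSeries.C (c 0 1 ℓ) * (exp ℂ * Js^N * X^(r-ℓ) * Us^(r-ℓ)) * (V * Vi) := by
          rw [mul_pow]; ring
      _ = _ := by rw [hVVi, mul_one]
  have hUsplit : Us ^ r = Us^(m-1) * Us^N := by
    rw [← pow_add]
    congr 1
    omega
  have hEqC : exp ℂ * Us^(m-1) * Bp =
      PowerSeries.C ((-1:ℂ)^r * (r.factorial:ℂ)) *
        (Sum2 + X^r * (exp ℂ * Js^N * Us^r * G * Vi)) := by
    calc exp ℂ * Us^(m-1) * Bp
        = (exp ℂ * Js^N * Bp * Vi) * (Us^r * V) := by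
          rw [hUsplit]
          calc exp ℂ * Us^(m-1) * Bp
              = exp ℂ * Us^(m-1) * Bp * (Js^N * Us^N) * (V * Vi) := by
                rw [hJU, hVVi, mul_one, mul_one]
            _ = (exp ℂ * Js^N * Bp * Vi) * (Us^(m-1) * Us^N * V) := by ring
      _ = (exp ℂ * Js^N * Bp * Vi) *
            ((PowerSeries.C ((-1:ℂ)^r * (r.factorial:ℂ)) * Vr) * (Sum1 + X^r*Us^r*G)) := by
          rw [hEqB]
      _ = PowerSeries.C ((-1:ℂ)^r * (r.factorial:ℂ)) * ((exp ℂ * Js^N * Vi) * Sum1) * (Bp * Vr)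
            + PowerSeries.C ((-1:ℂ)^r * (r.factorial:ℂ)) *
              (X^r * (exp ℂ * Js^N * Us^r * G * Vi)) * (Bp * Vr) := by ring
      _ = _ := by rw [hSumlemma, hBpVr, mul_one, mul_one, mul_add]
  -- take coefficient r - m
  have hcoeffterm : ∀ ℓ ∈ Finset.Icc 1 r,
      coeff (r-m) (exp ℂ * Js^N * X^(r-ℓ) * Us^(r-ℓ)) = if ℓ = m then 1 else 0 := by
    intro ℓ hℓ
    obtain ⟨hℓ1, hℓr⟩ := Finset.mem_Icc.mp hℓ
    have hre : exp ℂ * Js^N * X^(r-ℓ) * Us^(r-ℓ) = X^(r-ℓ) * (exp ℂ * Js^N * Us^(r-ℓ)) := by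
      ring
    rw [hre, PowerSeries.coeff_X_pow_mul']
    rcases lt_trichotomy ℓ m with hlt | heq | hgt
    · rw [if_neg (by omega), if_neg (by omega)]
    · subst heq
      rw [if_pos (le_refl _), if_pos rfl, Nat.sub_self]
      rw [coeff_zero_eq_constantCoeff_apply, map_mul, map_mul, map_pow, map_pow,
        constantCoeff_exp, constantCoeff_Js, constantCoeff_Us]
      simp
    · rw [if_pos (by omega), if_neg (by omega)]
      have hidx : r - m - (r - ℓ) = ℓ - m := by omega
      rw [hidx]
      have hsplit : (Js : ℂ⟦X⟧)^N = Js^(ℓ-m+1) * Js^(r-ℓ) := by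
        rw [← pow_add]
        congr 1
        omega
      have hJU2 : (Js : ℂ⟦X⟧)^(r-ℓ) * Us^(r-ℓ) = 1 := by
        rw [← mul_pow, mul_comm Js Us, Us_mul_Js, one_pow]
      have hre2 : exp ℂ * Js^N * Us^(r-ℓ) = exp ℂ * Js^(ℓ-m+1) * (Js^(r-ℓ) * Us^(r-ℓ)) := by
        rw [hsplit]; ring
      rw [hre2, hJU2, mul_one]
      obtain ⟨k, hk⟩ : ∃ k, ℓ - m = k + 1 := ⟨ℓ - m - 1, by omega⟩
      rw [hk, show k + 1 + 1 = k + 2 from rfl]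
      exact key_resid k
  have hkey : coeff (r-m) (exp ℂ * Us^(m-1) * Bp) = (-1:ℂ)^r * (r.factorial:ℂ) * c 0 1 m := by
    rw [hEqC, PowerSeries.coeff_C_mul, map_add]
    have hz2 : coeff (r-m) (X^r * (exp ℂ * Js^N * Us^r * G * Vi)) = 0 := by
      rw [PowerSeries.coeff_X_pow_mul', if_neg (by omega)]
    rw [hz2, add_zero, hSum2def]
    rw [map_sum]
    have : ∀ ℓ ∈ Finset.Icc 1 r,
        coeff (r-m) (PowerSeries.C (c 0 1 ℓ) * (exp ℂ * Js^N * X^(r-ℓ) * Us^(r-ℓ))) =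
          if ℓ = m then c 0 1 ℓ else 0 := by
      intro ℓ hℓ
      rw [PowerSeries.coeff_C_mul, hcoeffterm ℓ hℓ]
      split_ifs <;> simp
    rw [Finset.sum_congr rfl this, Finset.sum_ite_eq' (Finset.Icc 1 r) m (fun ℓ => c 0 1 ℓ),
      if_pos hm]
  -- Step 6: identify the coefficient with the Stirling-Bernoulli sum
  have hshift : coeff (r-m) (exp ℂ * Us^(m-1) * Bp) =
      coeff (r-1) ((exp ℂ * (exp ℂ - 1)^(m-1)) * Bp) := by
    have h1 : (exp ℂ * (exp ℂ - 1)^(m-1)) * Bp = X^(m-1) * (exp ℂ * Us^(m-1) * Bp) := by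
      rw [← X_mul_Us, mul_pow]
      ring
    rw [h1, PowerSeries.coeff_X_pow_mul', if_pos (by omega : m - 1 ≤ r - 1),
      show r - 1 - (m-1) = r - m from by omega]
  have hstep6 : coeff (r-m) (exp ℂ * Us^(m-1) * Bp) =
      ((m-1).factorial : ℂ) * ∑ ℓ ∈ Finset.Icc m r,
        ((stirling2 ℓ m : ℂ) / ((ℓ-1).factorial : ℂ)) *
          ∑ i ∈ Finset.Nat.antidiagonalTuple r (r - ℓ),
            ∏ k : ((Fin r)),
              (((bernoulli (i k) : ℚ) : ℂ) / ((i k).factorial : ℂ) *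
                (((k : ℕ) + 1 : ℕ) : ℂ) ^ (i k)) := by
    rw [hshift, PowerSeries.coeff_mul, Finset.Nat.sum_antidiagonal_eq_sum_range_succ_mk,
      show (r - 1).succ = r from by omega]
    have hterm : ∀ j ∈ Finset.range r,
        coeff j (exp ℂ * (exp ℂ - 1)^(m-1)) * coeff (r-1-j) Bp =
          ((m-1).factorial : ℂ) * ((stirling2 (j+1) m : ℂ) / ((j.factorial : ℕ) : ℂ) *
            ∑ i ∈ Finset.Nat.antidiagonalTuple r (r-(j+1)),
              ∏ k : ((Fin r)),
                (((bernoulli (i k) : ℚ) : ℂ) / ((i k).factorial : ℂ) *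
                  (((k : ℕ) + 1 : ℕ) : ℂ) ^ (i k))) := by
      intro j _
      rw [coeff_exp_mul_exp_sub_one_pow m j hm1, hBpdef, coeff_Bp,
        show r - 1 - j = r - (j+1) from by omega]
      ring
    rw [Finset.sum_congr rfl hterm, ← Finset.mul_sum]
    congr 1
    -- reindex range r → Icc 1 r with ℓ = j + 1
    have hreindex : ∑ j ∈ Finset.range r,
        ((stirling2 (j+1) m : ℂ) / ((j.factorial : ℕ) : ℂ) *
          ∑ i ∈ Finset.Nat.antidiagonalTuple r (r-(j+1)),
            ∏ k : ((Fin r)), (((bernoulli (i k) : ℚ) : ℂ) / ((i k).factorial : ℂ) *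
              (((k : ℕ) + 1 : ℕ) : ℂ) ^ (i k))) =
        ∑ ℓ ∈ Finset.Icc 1 r,
        ((stirling2 ℓ m : ℂ) / (((ℓ-1).factorial : ℕ) : ℂ) *
          ∑ i ∈ Finset.Nat.antidiagonalTuple r (r-ℓ),
            ∏ k : ((Fin r)), (((bernoulli (i k) : ℚ) : ℂ) / ((i k).factorial : ℂ) *
              (((k : ℕ) + 1 : ℕ) : ℂ) ^ (i k))) := by
      apply Finset.sum_nbij' (i := fun j => j + 1) (j := fun ℓ => ℓ - 1)
      · intro j hj
        rw [Finset.mem_Icc]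
        rw [Finset.mem_range] at hj
        omega
      · intro ℓ hℓ
        rw [Finset.mem_Icc] at hℓ
        rw [Finset.mem_range]
        omega
      · intro j _; omega
      · intro ℓ hℓ
        rw [Finset.mem_Icc] at hℓ
        omega
      · intro j _
        rw [show j + 1 - 1 = j from by omega]
    rw [hreindex]
    symm
    apply Finset.sum_subset
    · exact Finset.Icc_subset_Icc (by omega) (le_refl r)
    · intro ℓ hℓin hℓout
      rw [Finset.mem_Icc] at hℓin
      rw [Finset.mem_Icc] at hℓout
      have hlm : ℓ < m := by omega
      rw [stirling2_of_lt hlm]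
      simp
  -- conclusion
  have heq : (-1:ℂ)^r * (r.factorial : ℂ) * c 0 1 m =
      ((m-1).factorial : ℂ) * ∑ ℓ ∈ Finset.Icc m r,
        ((stirling2 ℓ m : ℂ) / ((ℓ-1).factorial : ℂ)) *
          ∑ i ∈ Finset.Nat.antidiagonalTuple r (r - ℓ),
            ∏ k : ((Fin r)),
              (((bernoulli (i k) : ℚ) : ℂ) / ((i k).factorial : ℂ) *
                (((k : ℕ) + 1 : ℕ) : ℂ) ^ (i k)) := hkey.symm.trans hstep6
  have hsq : (-1:ℂ)^r * (-1:ℂ)^r = 1 := by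
    rw [← mul_pow]
    norm_num
  have hrf : ((r.factorial : ℕ) : ℂ) ≠ 0 := Nat.cast_ne_zero.mpr (Nat.factorial_ne_zero r)
  rw [div_mul_eq_mul_div, eq_div_iff hrf]
  linear_combination ((-1:ℂ)^r) * heq - c 0 1 m * ((r.factorial : ℕ) : ℂ) * hsq
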